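/- If ρ is a pure state (rank-one projector), the von Neumann entropy of S(ρ) = ½(|0⟩⟨0|+|1⟩⟨1|) ⊗ I/d + ½(|0⟩⟨1|+|1⟩⟨0|) ⊗ ρ/d² equals −[((d+1)/(2d²)) log((d+1)/(2d²)) + ((d−1)/(2d²)) log((d−1)/(2d²)) + 2(d−1)(1/(2d)) log(1/(2d))]. -/

import Mathlib

open Matrix Kronecker BigOperators

/-- The output of the quantum SWITCH of two completely depolarizing channels
with control in `|+⟩`, written system ⊗ control. -/
noncomputable def switchOut (d : ℕ) (ρ : Matrix (Fin d) (Fin d) ℂ) :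
    Matrix (Fin d × Fin 2) (Fin d × Fin 2) ℂ :=
  (2 * (d : ℂ))⁻¹ • ((1 : Matrix (Fin d) (Fin d) ℂ) ⊗ₖ
      (Matrix.single (0 : Fin 2) 0 (1 : ℂ) + Matrix.single (1 : Fin 2) 1 (1 : ℂ)))
    + (2 * (d : ℂ) ^ 2)⁻¹ • (ρ ⊗ₖ
      (Matrix.single (0 : Fin 2) 1 (1 : ℂ) + Matrix.single (1 : Fin 2) 0 (1 : ℂ)))


lemma trace_eq_sum_eigenvalues' {n : Type*} [Fintype n] [DecidableEq n]
    {M : Matrix n n ℂ} (hM : M.IsHermitian) :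
    M.trace = ∑ i, (hM.eigenvalues i : ℂ) := by
  conv_lhs => rw [hM.spectral_theorem, Unitary.conjStarAlgAut_apply]
  rw [trace_mul_comm, ← mul_assoc, mem_unitaryGroup_iff'.mp (hM.eigenvectorUnitary).2, one_mul,
    trace_diagonal]
  rfl

lemma trace_sq_eq_sum_sq' {n : Type*} [Fintype n] [DecidableEq n]
    {M : Matrix n n ℂ} (hM : M.IsHermitian) :
    (M * M).trace = ∑ i, (hM.eigenvalues i : ℂ) ^ 2 := by
  conv_lhs => rw [hM.spectral_theorem, Unitary.conjStarAlgAut_apply]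
  rw [show ∀ U D : Matrix n n ℂ, (U * D * star U) * (U * D * star U) = U * (D * (star U * U) * D) * star U
    from fun U D => by noncomm_ring]
  rw [mem_unitaryGroup_iff'.mp (hM.eigenvectorUnitary).2, mul_one,
    trace_mul_comm, ← mul_assoc, mem_unitaryGroup_iff'.mp (hM.eigenvectorUnitary).2, one_mul,
    diagonal_mul_diagonal, trace_diagonal]
  simp [sq]

lemma diagE : Matrix.single (0 : Fin 2) 0 (1 : ℂ) + Matrix.single (1 : Fin 2) 1 (1 : ℂ)
    = (1 : Matrix (Fin 2) (Fin 2) ℂ) := by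
  ext i j
  fin_cases i <;> fin_cases j <;> simp [Matrix.single, Matrix.one_apply]

lemma X_sq : (Matrix.single (0 : Fin 2) 1 (1 : ℂ) + Matrix.single (1 : Fin 2) 0 (1 : ℂ))
    * (Matrix.single (0 : Fin 2) 1 (1 : ℂ) + Matrix.single (1 : Fin 2) 0 (1 : ℂ))
    = (1 : Matrix (Fin 2) (Fin 2) ℂ) := by
  ext i j
  fin_cases i <;> fin_cases j <;>
    simp [Matrix.mul_apply, Fin.sum_univ_two, Matrix.single, Matrix.one_apply]


lemma X_tr : ((Matrix.single (0 : Fin 2) 1 (1 : ℂ) + Matrix.single (1 : Fin 2) 0 (1 : ℂ) : Matrix (Fin 2) (Fin 2) ℂ)).trace = 0 := by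
  simp [Matrix.trace, Matrix.diag, Fin.sum_univ_two, Matrix.single]

theorem switchOut_entropy_pure (d : ℕ) (hd : 2 ≤ d)
    (ρ : Matrix (Fin d) (Fin d) ℂ) (hρ : ρ.IsHermitian)
    (hproj : ρ * ρ = ρ) (htr : ρ.trace = 1)
    (hS : (switchOut d ρ).IsHermitian) :
    -∑ k : Fin d × Fin 2, hS.eigenvalues k * Real.log (hS.eigenvalues k)
      = -(((d : ℝ) + 1) / (2 * (d : ℝ) ^ 2) * Real.log (((d : ℝ) + 1) / (2 * (d : ℝ) ^ 2))
          + ((d : ℝ) - 1) / (2 * (d : ℝ) ^ 2) * Real.log (((d : ℝ) - 1) / (2 * (d : ℝ) ^ 2))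
          + 2 * ((d : ℝ) - 1) * (1 / (2 * (d : ℝ))) * Real.log (1 / (2 * (d : ℝ)))) := by
  have hdR : (2 : ℝ) ≤ (d : ℝ) := by exact_mod_cast hd
  have hd0 : (d : ℝ) ≠ 0 := by linarith
  have hdC : (d : ℂ) ≠ 0 := by exact_mod_cast (show (d:ℕ) ≠ 0 by omega)
  set a : ℂ := (2 * (d : ℂ))⁻¹ with ha
  set b : ℂ := (2 * (d : ℂ) ^ 2)⁻¹ with hb
  set X : Matrix (Fin 2) (Fin 2) ℂ :=
    Matrix.single (0 : Fin 2) 1 (1 : ℂ) + Matrix.single (1 : Fin 2) 0 (1 : ℂ) with hX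
  set N : Matrix (Fin d × Fin 2) (Fin d × Fin 2) ℂ := ρ ⊗ₖ X with hN
  set M : Matrix (Fin d × Fin 2) (Fin d × Fin 2) ℂ := switchOut d ρ with hMdef
  have hM : M = a • 1 + b • N := by
    rw [hMdef]; unfold switchOut
    rw [diagE, Matrix.one_kronecker_one]
  have hN2 : N * N = ρ ⊗ₖ (1 : Matrix (Fin 2) (Fin 2) ℂ) := by
    rw [hN, ← Matrix.mul_kronecker_mul, hproj, show X * X = 1 from by rw [hX]; exact X_sq]
  have hN3 : N * N * N = N := by
    rw [hN2, hN, ← Matrix.mul_kronecker_mul, hproj, Matrix.one_mul]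
  -- eigenvalues are among three values
  set A : ℝ := ((d : ℝ) + 1) / (2 * (d : ℝ) ^ 2) with hA
  set B : ℝ := ((d : ℝ) - 1) / (2 * (d : ℝ) ^ 2) with hB
  set C : ℝ := 1 / (2 * (d : ℝ)) with hC
  have hAc : ((A : ℝ) : ℂ) = a + b := by
    rw [hA, ha, hb]; push_cast; field_simp
  have hBc : ((B : ℝ) : ℂ) = a - b := by
    rw [hB, ha, hb]; push_cast; field_simp
  have hCc : ((C : ℝ) : ℂ) = a := by
    rw [hC, ha]; push_cast; rw [one_div]
  have hpoly : (M - (a + b) • 1) * (M - (a - b) • 1) * (M - a • 1) = 0 := by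
    have h1 : M - (a + b) • 1 = b • (N - 1) := by rw [hM]; module
    have h2 : M - (a - b) • 1 = b • (N + 1) := by rw [hM]; module
    have h3 : M - a • 1 = b • N := by rw [hM]; module
    have hz1 : (N - 1) * (N + 1) * N = 0 := by
      rw [show (N - 1) * (N + 1) * N = N * N * N - N from by noncomm_ring, hN3, sub_self]
    have hz2 : (N - 1) * ((N + 1) * N) = 0 := by rw [← mul_assoc]; exact hz1
    rw [h1, h2, h3]
    simp only [Matrix.smul_mul, Matrix.mul_smul, smul_smul, hz1, hz2, smul_zero, mul_zero, zero_mul]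
  have hmem : ∀ k : Fin d × Fin 2, hS.eigenvalues k = A ∨ hS.eigenvalues k = B ∨
      hS.eigenvalues k = C := by
    intro k
    have hv := hS.mulVec_eigenvectorBasis k
    set v : (Fin d × Fin 2) → ℂ := ⇑(hS.eigenvectorBasis k) with hvdef
    have hv0 : v ≠ 0 := by
      intro h
      exact hS.eigenvectorBasis.orthonormal.ne_zero k (by ext i; exact congrFun h i)
    have hv' : M *ᵥ v = ((hS.eigenvalues k : ℂ)) • v := by
      rw [hv]
      ext i
      simp [Complex.real_smul]
    have step : ∀ c : ℂ, (M - c • 1) *ᵥ v = ((hS.eigenvalues k : ℂ) - c) • v := by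
      intro c
      rw [Matrix.sub_mulVec, hv', Matrix.smul_mulVec, Matrix.one_mulVec, sub_smul]
    have e0 : (M - (a + b) • 1) *ᵥ ((M - (a - b) • 1) *ᵥ ((M - a • 1) *ᵥ v)) = 0 := by
      rw [Matrix.mulVec_mulVec, Matrix.mulVec_mulVec, hpoly, Matrix.zero_mulVec]
    simp only [step, Matrix.mulVec_smul, smul_smul] at e0
    have hc := (smul_eq_zero.mp e0).resolve_right hv0
    have hfac : ((hS.eigenvalues k : ℂ) - (a + b)) * (((hS.eigenvalues k : ℂ) - (a - b))
        * ((hS.eigenvalues k : ℂ) - a)) = 0 := by linear_combination hc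
    rcases mul_eq_zero.mp hfac with h | h
    · left
      have h2 : ((hS.eigenvalues k : ℝ) : ℂ) = ((A : ℝ) : ℂ) := by rw [hAc]; linear_combination h
      exact_mod_cast h2
    · rcases mul_eq_zero.mp h with h' | h'
      · right; left
        have h2 : ((hS.eigenvalues k : ℝ) : ℂ) = ((B : ℝ) : ℂ) := by rw [hBc]; linear_combination h'
        exact_mod_cast h2
      · right; right
        have h2 : ((hS.eigenvalues k : ℝ) : ℂ) = ((C : ℝ) : ℂ) := by rw [hCc]; linear_combination h'
        exact_mod_cast h2
  -- trace identities
  have htrM : ∑ k, hS.eigenvalues k = 1 := by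
    have h1 : M.trace = 1 := by
      rw [hM, Matrix.trace_add, Matrix.trace_smul, Matrix.trace_smul, Matrix.trace_one,
        hN, Matrix.trace_kronecker, show X.trace = 0 from by rw [hX]; exact X_tr, htr]
      simp only [mul_zero, smul_zero, add_zero, Fintype.card_prod, Fintype.card_fin]
      rw [ha]
      push_cast
      rw [smul_eq_mul]
      field_simp
    have h2 := trace_eq_sum_eigenvalues' hS
    have hcast : ((∑ k, hS.eigenvalues k : ℝ) : ℂ) = ∑ k, (hS.eigenvalues k : ℂ) := by
      push_cast; rfl
    apply Complex.ofReal_inj.mp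
    rw [hcast, ← h2, h1]
    norm_num
  have htrM2 : ∑ k, (hS.eigenvalues k) ^ 2 = 1 / (2 * (d:ℝ)) + 1 / (2 * (d:ℝ)^4) := by
    have hMM : M * M = (a * a) • 1 + ((a * b) • N + ((b * a) • N +
        (b * b) • (ρ ⊗ₖ (1 : Matrix (Fin 2) (Fin 2) ℂ)))) := by
      rw [hM]
      simp only [add_mul, mul_add, Matrix.smul_mul, Matrix.mul_smul, smul_smul,
        Matrix.one_mul, Matrix.mul_one, hN2]
      abel
    have h1 : (M * M).trace = ((1 / (2 * (d:ℝ)) + 1 / (2 * (d:ℝ)^4) : ℝ) : ℂ) := by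
      rw [hMM]
      rw [Matrix.trace_add, Matrix.trace_add, Matrix.trace_add, Matrix.trace_smul,
        Matrix.trace_smul, Matrix.trace_smul, Matrix.trace_smul, Matrix.trace_one,
        hN, Matrix.trace_kronecker, show X.trace = 0 from by rw [hX]; exact X_tr, Matrix.trace_kronecker, htr,
        Matrix.trace_one]
      simp only [mul_zero, smul_zero, add_zero, zero_add, Fintype.card_prod, Fintype.card_fin,
        Fintype.card_fin]
      rw [ha, hb]
      simp only [smul_eq_mul]
      push_cast
      field_simp
    have h2 := trace_sq_eq_sum_sq' hS
    have hcast : ((∑ k, (hS.eigenvalues k)^2 : ℝ) : ℂ) = ∑ k, (hS.eigenvalues k : ℂ)^2 := by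
      push_cast; rfl
    apply Complex.ofReal_inj.mp
    rw [hcast, ← h2, h1]
  -- partition counting
  classical
  set lam := hS.eigenvalues with hlam
  set sA := Finset.univ.filter (fun k : Fin d × Fin 2 => lam k = A) with hsA
  set sB := Finset.univ.filter (fun k : Fin d × Fin 2 => ¬ lam k = A ∧ lam k = B) with hsB
  set sC := Finset.univ.filter (fun k : Fin d × Fin 2 => ¬ lam k = A ∧ ¬ lam k = B) with hsC
  have hABd : Disjoint sA sB := by
    rw [Finset.disjoint_left]
    intro k hk hk'
    exact (Finset.mem_filter.mp hk').2.1 (Finset.mem_filter.mp hk).2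
  have hABCd : Disjoint (sA ∪ sB) sC := by
    rw [Finset.disjoint_left]
    intro k hk hk'
    have hC' := (Finset.mem_filter.mp hk').2
    rcases Finset.mem_union.mp hk with h | h
    · exact hC'.1 (Finset.mem_filter.mp h).2
    · exact hC'.2 (Finset.mem_filter.mp h).2.2
  have huniv : sA ∪ sB ∪ sC = Finset.univ := by
    ext k
    simp only [Finset.mem_union, hsA, hsB, hsC, Finset.mem_filter, Finset.mem_univ, true_and,
      iff_true]
    by_cases h1 : lam k = A
    · exact Or.inl (Or.inl h1)
    · by_cases h2 : lam k = B
      · exact Or.inl (Or.inr ⟨h1, h2⟩)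
      · exact Or.inr ⟨h1, h2⟩
  have key : ∀ g : ℝ → ℝ, ∑ k, g (lam k) =
      (sA.card : ℝ) * g A + (sB.card : ℝ) * g B + (sC.card : ℝ) * g C := by
    intro g
    have e1 : ∑ k ∈ sA, g (lam k) = (sA.card : ℝ) * g A := by
      rw [Finset.sum_congr rfl (fun k hk => by
        rw [(Finset.mem_filter.mp hk).2]), Finset.sum_const, nsmul_eq_mul]
    have e2 : ∑ k ∈ sB, g (lam k) = (sB.card : ℝ) * g B := by
      rw [Finset.sum_congr rfl (fun k hk => by
        rw [(Finset.mem_filter.mp hk).2.2]), Finset.sum_const, nsmul_eq_mul]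
    have e3 : ∑ k ∈ sC, g (lam k) = (sC.card : ℝ) * g C := by
      refine Eq.trans (Finset.sum_congr rfl (fun k hk => ?_))
        (by rw [Finset.sum_const, nsmul_eq_mul])
      have hk' := Finset.mem_filter.mp hk
      rcases hmem k with h | h | h
      · exact absurd h hk'.2.1
      · exact absurd h hk'.2.2
      · rw [h]
    rw [← huniv, Finset.sum_union hABCd, Finset.sum_union hABd, e1, e2, e3]
  have ecard : (sA.card : ℝ) + sB.card + sC.card = 2 * d := by
    have := key (fun _ => 1)
    simp only [mul_one] at this
    rw [← this]
    rw [Finset.sum_const, Finset.card_univ, Fintype.card_prod, Fintype.card_fin, Fintype.card_fin]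
    push_cast; ring
  have e2 : (sA.card : ℝ) * A + sB.card * B + sC.card * C = 1 := by
    have := key id
    simp only [id] at this
    rw [← this, htrM]
  have e3 : (sA.card : ℝ) * A^2 + sB.card * B^2 + sC.card * C^2
      = 1 / (2 * (d:ℝ)) + 1 / (2 * (d:ℝ)^4) := by
    have := key (fun t => t^2)
    rw [← this, htrM2]
  set x : ℝ := (sA.card : ℝ) with hx'
  set y : ℝ := (sB.card : ℝ) with hy'
  set z : ℝ := (sC.card : ℝ) with hz'
  rw [hA, hB, hC] at e2 e3
  field_simp at e2 e3
  have h2d : (2 : ℝ) * d ≠ 0 := by positivity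
  have hxy : x = y := by
    refine mul_left_cancel₀ h2d ?_
    linear_combination 2 * (d:ℝ) * (e2 - (d:ℝ) * ecard)
  have hd7 : (32 : ℝ) * (d:ℝ)^7 ≠ 0 := by positivity
  have hx1 : x = 1 := by
    refine mul_left_cancel₀ hd7 ?_
    linear_combination 16 * (d:ℝ)^7 * (e3 - (d:ℝ)^2 * ecard + (1 - 2*(d:ℝ)) * hxy)
  have hy1 : y = 1 := hxy ▸ hx1
  have hz1 : z = 2 * (d:ℝ) - 2 := by linear_combination ecard - hx1 - hy1
  have hgoal := key (fun t => t * Real.log t)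
  rw [hgoal, hx1, hy1, hz1]
  ring
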